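/- Let π be a permutation of a finite vertex set V that factors according to vertex-disjoint cycles in a directed graph G = (V, E), i.e., for each nontrivial cycle (i₁ i₂ ⋯ i_s) of π, the directed cycle i₁→i₂→⋯→i_s→i₁ lies in G. Then the map G ↦ π(G), where π(E) contains i→j iff (i = π(j) and i ≠ j) or (i ≠ π(j), i ≠ j, and i→π(j) ∈ E), defines a graph in which π^{-1} factors according to vertex-disjoint cycles, and π^{-1}(π(G)) = G. -/

import Mathlib

/-- The edge set `π(E)` of the transformed graph `π(G)`. -/
def mapEdges {V : Type*} (π : Equiv.Perm V) (E : V → V → Prop) : V → V → Prop :=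
  fun i j => (i = π j ∧ i ≠ j) ∨ (i ≠ π j ∧ i ≠ j ∧ E i (π j))

/-- If `π` factors according to vertex-disjoint cycles in `G = (V, E)` (a finite
directed graph without self-loops), then `π⁻¹` factors according to vertex-disjoint
cycles in `π(G)`, and `π⁻¹(π(G)) = G`. -/
theorem stmt_18 {V : Type*} [Fintype V] [DecidableEq V]
    (E : V → V → Prop) (hloop : ∀ v, ¬ E v v)
    (π : Equiv.Perm V) (hfac : ∀ i, π i ≠ i → E i (π i)) :
    (∀ i, π⁻¹ i ≠ i → mapEdges π E i (π⁻¹ i)) ∧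
      mapEdges π⁻¹ (mapEdges π E) = E := by
  have hap : ∀ x, π (π⁻¹ x) = x := fun x => π.apply_symm_apply x
  constructor
  · intro i hi
    left
    exact ⟨(hap i).symm, hi.symm⟩
  · funext i j
    simp only [mapEdges, hap, eq_iff_iff]
    constructor
    · rintro (⟨h1, h2⟩ | ⟨h1, h2, (⟨h3, h4⟩ | ⟨h3, h4, h5⟩)⟩)
      · have hpi : π i = j := by rw [h1, hap]
        have := hfac i (hpi ▸ fun h => h2 h.symm)
        rwa [hpi] at this
      · exact absurd h3 h2
      · exact h5
    · intro hE
      have hij : i ≠ j := fun h => hloop j (h ▸ hE)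
      by_cases h : i = π⁻¹ j
      · exact Or.inl ⟨h, hij⟩
      · exact Or.inr ⟨h, hij, Or.inr ⟨hij, h, hE⟩⟩
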